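/- There exists a constant C > 0 such that for every positive integer n, τ(n) ≤ C·n^(4/3); that is, the peeling process on the n × n integer grid terminates after O(n^(4/3)) iterations. -/

import Mathlib

/-- Remove from `P` the extreme points (vertices) of its convex hull. -/
noncomputable def peel (P : Set (ℝ × ℝ)) : Set (ℝ × ℝ) :=
  P \ (convexHull ℝ P).extremePoints ℝ

/-- Number of peeling iterations until the set is empty. -/
noncomputable def tau (Q : Set (ℝ × ℝ)) : ℕ :=
  sInf {k : ℕ | peel^[k] Q = ∅}

/-- The `n × n` integer grid `{1,…,n}²`, viewed in `ℝ²`. -/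
def grid (n : ℕ) : Set (ℝ × ℝ) :=
  {p | ∃ a b : ℕ, 1 ≤ a ∧ a ≤ n ∧ 1 ≤ b ∧ b ≤ n ∧ p = ((a : ℝ), (b : ℝ))}


namespace TauGridAux

open Finset

/-- The linear functional attached to a direction `v`. -/
def phi (v : ℕ × ℕ) (p : ℝ × ℝ) : ℝ := v.1 * p.1 + v.2 * p.2

/-- The peeling sequence started at the grid. -/
def S (n r : ℕ) : Set (ℝ × ℝ) := peel^[r] (grid n)

lemma S_succ (n r : ℕ) : S n (r + 1) = peel (S n r) :=
  Function.iterate_succ_apply' _ _ _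

lemma peel_subset (P : Set (ℝ × ℝ)) : peel P ⊆ P := Set.diff_subset

lemma S_mono (n : ℕ) {r r' : ℕ} (h : r ≤ r') : S n r' ⊆ S n r := by
  induction r' with
  | zero => simp_all
  | succ k ih =>
      rcases Nat.lt_or_ge r (k+1) with hlt | hge
      · exact le_trans (by rw [S_succ]; exact peel_subset _) (ih (Nat.lt_succ_iff.mp hlt))
      · have : r = k + 1 := le_antisymm h hge
        subst this; exact le_rfl

lemma S_subset_grid (n r : ℕ) : S n r ⊆ grid n := S_mono n (Nat.zero_le r)

lemma grid_finite (n : ℕ) : (grid n).Finite := by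
  have h : grid n ⊆ (fun ab : ℕ × ℕ => ((ab.1 : ℝ), (ab.2 : ℝ))) ''
      (Set.Icc 1 n ×ˢ Set.Icc 1 n) := by
    rintro p ⟨a, b, ha1, ha2, hb1, hb2, rfl⟩
    exact ⟨(a, b), ⟨⟨ha1, ha2⟩, ⟨hb1, hb2⟩⟩, rfl⟩
  exact (((Set.finite_Icc 1 n).prod (Set.finite_Icc 1 n)).image _).subset h

lemma S_finite (n r : ℕ) : (S n r).Finite :=
  (grid_finite n).subset (S_subset_grid n r)

lemma S_empty_mono (n : ℕ) {r r' : ℕ} (h : r ≤ r') (he : S n r = ∅) : S n r' = ∅ :=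
  Set.subset_eq_empty (by rw [← he]; exact S_mono n h) rfl

/-- coordinates of grid points are in `[1, n]`. -/
lemma grid_coord {n : ℕ} {p : ℝ × ℝ} (hp : p ∈ grid n) :
    1 ≤ p.1 ∧ p.1 ≤ n ∧ 1 ≤ p.2 ∧ p.2 ≤ n := by
  obtain ⟨a, b, ha1, ha2, hb1, hb2, rfl⟩ := hp
  simp only []
  constructor
  · exact_mod_cast ha1
  constructor
  · exact_mod_cast ha2
  constructor
  · exact_mod_cast hb1
  · exact_mod_cast hb2

/-- `phi v` takes natural values on the grid, within an explicit range. -/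
lemma grid_phi_nat {v : ℕ × ℕ} (hv1 : 1 ≤ v.1) (hv2 : 1 ≤ v.2) {n : ℕ} {p : ℝ × ℝ}
    (hp : p ∈ grid n) :
    ∃ k : ℕ, phi v p = k ∧ v.1 + v.2 ≤ k ∧ k ≤ (v.1 + v.2) * n := by
  obtain ⟨a, b, ha1, ha2, hb1, hb2, rfl⟩ := hp
  refine ⟨v.1 * a + v.2 * b, by push_cast [phi]; ring, ?_, ?_⟩
  · exact add_le_add (Nat.le_mul_of_pos_right _ ha1) (Nat.le_mul_of_pos_right _ hb1)
  · calc v.1 * a + v.2 * b ≤ v.1 * n + v.2 * n :=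
          add_le_add (Nat.mul_le_mul_left _ ha2) (Nat.mul_le_mul_left _ hb2)
    _ = (v.1 + v.2) * n := by ring

/-- Integrality gap: distinct `phi` values on the grid differ by at least 1. -/
lemma grid_phi_gap {v : ℕ × ℕ} (hv1 : 1 ≤ v.1) (hv2 : 1 ≤ v.2) {n : ℕ} {p q : ℝ × ℝ}
    (hp : p ∈ grid n) (hq : q ∈ grid n) (h : phi v p < phi v q) :
    phi v p + 1 ≤ phi v q := by
  obtain ⟨k, hk, -, -⟩ := grid_phi_nat hv1 hv2 hp
  obtain ⟨l, hl, -, -⟩ := grid_phi_nat hv1 hv2 hq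
  rw [hk, hl] at h ⊢
  exact_mod_cast Nat.succ_le_of_lt (by exact_mod_cast h)

/-- Two points with the same `phi`-value and the same first coordinate coincide. -/
lemma eq_of_phi_eq_fst_eq {v : ℕ × ℕ} (hv2 : 1 ≤ v.2) {p q : ℝ × ℝ}
    (hphi : phi v p = phi v q) (hx : p.1 = q.1) : p = q := by
  have h2 : (v.2 : ℝ) ≠ 0 := by positivity
  have : (v.2 : ℝ) * p.2 = (v.2 : ℝ) * q.2 := by
    have := hphi; unfold phi at this; rw [hx] at this; linarith
  have : p.2 = q.2 := mul_left_cancel₀ h2 this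
  exact Prod.ext hx this


/-- The linear functional value distributes over convex combinations. -/
lemma lin_comb (α β a b : ℝ) (x y : ℝ × ℝ) :
    α * (a • x + b • y).1 + β * (a • x + b • y).2
      = a * (α * x.1 + β * x.2) + b * (α * y.1 + β * y.2) := by
  simp [Prod.fst_add, Prod.snd_add, Prod.smul_fst, Prod.smul_snd, smul_eq_mul]
  ring

lemma halfspace_convex (α β c : ℝ) : Convex ℝ {p : ℝ × ℝ | c ≤ α * p.1 + β * p.2} := by
  intro x hx y hy a b ha hb hab
  simp only [Set.mem_setOf_eq] at *
  rw [lin_comb α β a b x y]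
  have h1 : a * c ≤ a * (α * x.1 + β * x.2) := mul_le_mul_of_nonneg_left hx ha
  have h2 : b * c ≤ b * (α * y.1 + β * y.2) := mul_le_mul_of_nonneg_left hy hb
  have h3 : a * c + b * c = c := by rw [← add_mul, hab, one_mul]
  linarith

lemma hull_ge {P : Set (ℝ × ℝ)} {α β c : ℝ} (h : ∀ p ∈ P, c ≤ α * p.1 + β * p.2) :
    ∀ y ∈ convexHull ℝ P, c ≤ α * y.1 + β * y.2 :=
  fun _ hy => convexHull_min h (halfspace_convex α β c) hy

/-- A point of a finite set which is the unique minimizer of a linear functional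
is an extreme point of the convex hull. -/
lemma extreme_of_unique_min {P : Set (ℝ × ℝ)} (hP : P.Finite) {q : ℝ × ℝ} (hq : q ∈ P)
    {α β : ℝ} (hmin : ∀ p ∈ P, p ≠ q → α * q.1 + β * q.2 < α * p.1 + β * p.2) :
    q ∈ (convexHull ℝ P).extremePoints ℝ := by
  classical
  set L : ℝ × ℝ → ℝ := fun p => α * p.1 + β * p.2 with hL
  have hPge : ∀ p ∈ P, L q ≤ L p := by
    intro p hp
    rcases eq_or_ne p q with rfl | hne
    · exact le_rfl
    · exact le_of_lt (hmin p hp hne)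
  have hhull : ∀ y ∈ convexHull ℝ P, L q ≤ L y := hull_ge hPge
  -- key: only q attains the value L q on the hull
  have key : ∀ y ∈ convexHull ℝ P, L y = L q → y = q := by
    intro y hy hLy
    rcases Set.eq_empty_or_nonempty (P \ {q}) with hemp | hne
    · have hPq : P = {q} := by
        apply Set.eq_of_subset_of_subset
        · intro p hp
          rcases eq_or_ne p q with rfl | h
          · rfl
          · exact absurd (Set.mem_diff_singleton.mpr ⟨hp, h⟩) (by simp [hemp])
        · intro p hp; rcases hp with rfl; exact hq
      rw [hPq, convexHull_singleton] at hy; exact hy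
    · -- positive gap on P \ {q}
      obtain ⟨p₀, hp₀⟩ := hne
      set m : ℝ := sInf (L '' (P \ {q})) with hm
      have himfin : (L '' (P \ {q})).Finite := hP.diff.image _
      have himne : (L '' (P \ {q})).Nonempty := ⟨L p₀, ⟨p₀, hp₀, rfl⟩⟩
      have hmmem : m ∈ L '' (P \ {q}) := himne.csInf_mem himfin
      have hmgt : L q < m := by
        obtain ⟨p, hp, hLp⟩ := hmmem
        rw [← hLp]; exact hmin p hp.1 hp.2
      have hmle : ∀ p ∈ P \ {q}, m ≤ L p := fun p hp =>
        csInf_le himfin.bddBelow ⟨p, hp, rfl⟩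
      have hins : P = insert q (P \ {q}) := by
        rw [Set.insert_diff_singleton, Set.insert_eq_self.mpr hq]
      have hyjoin : y ∈ convexJoin ℝ {q} (convexHull ℝ (P \ {q})) := by
        rw [← convexHull_insert ⟨p₀, hp₀⟩, ← hins]; exact hy
      rw [mem_convexJoin] at hyjoin
      obtain ⟨q', hq', z, hz, hseg⟩ := hyjoin
      have hq'q : q' = q := hq'
      subst hq'q
      obtain ⟨a, b, ha, hb, hab, hyz⟩ := hseg
      have hLz : m ≤ L z := hull_ge hmle z hz
      have hLy2 : L y = a * L q' + b * L z := by
        rw [← hyz, hL]; exact lin_comb α β a b q' z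
      have hsplit : a * L q' + b * L q' = L q' := by rw [← add_mul, hab, one_mul]
      have hb0 : b = 0 := by
        by_contra hb0
        have hbpos : 0 < b := lt_of_le_of_ne hb (Ne.symm hb0)
        have : b * L q' < b * L z := mul_lt_mul_of_pos_left (lt_of_lt_of_le hmgt hLz) hbpos
        linarith
      have ha1 : a = 1 := by linarith
      rw [← hyz, hb0, ha1]; simp
  rw [mem_extremePoints]
  refine ⟨subset_convexHull ℝ P hq, ?_⟩
  intro x₁ h₁ x₂ h₂ hseg
  obtain ⟨a, b, ha, hb, hab, hx⟩ := hseg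
  have hLq : L q = a * L x₁ + b * L x₂ := by rw [← hx, hL]; exact lin_comb α β a b x₁ x₂
  have hsplit : a * L q + b * L q = L q := by rw [← add_mul, hab, one_mul]
  have t1 : a * L q ≤ a * L x₁ := mul_le_mul_of_nonneg_left (hhull x₁ h₁) ha.le
  have t2 : b * L q ≤ b * L x₂ := mul_le_mul_of_nonneg_left (hhull x₂ h₂) hb.le
  have h1 : L x₁ = L q := by
    by_contra hne1
    have : L q < L x₁ := lt_of_le_of_ne (hhull x₁ h₁) (Ne.symm hne1)
    have : a * L q < a * L x₁ := mul_lt_mul_of_pos_left this ha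
    linarith
  have h2 : L x₂ = L q := by
    by_contra hne2
    have : L q < L x₂ := lt_of_le_of_ne (hhull x₂ h₂) (Ne.symm hne2)
    have : b * L q < b * L x₂ := mul_lt_mul_of_pos_left this hb
    linarith
  exact ⟨key x₁ h₁ h1, key x₂ h₂ h2⟩

end TauGridAux
section P3
namespace TauGridAux

noncomputable def lev (n : ℕ) (v : ℕ × ℕ) (r : ℕ) : ℝ := sInf (phi v '' S n r)

lemma lev_mem {n r : ℕ} (v : ℕ × ℕ) (hne : (S n r).Nonempty) :
    ∃ p ∈ S n r, phi v p = lev n v r := by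
  have hmem : lev n v r ∈ phi v '' S n r :=
    (hne.image _).csInf_mem ((S_finite n r).image _)
  obtain ⟨p, hp, hphi⟩ := hmem
  exact ⟨p, hp, hphi⟩

lemma lev_le {n r : ℕ} (v : ℕ × ℕ) {p : ℝ × ℝ} (hp : p ∈ S n r) :
    lev n v r ≤ phi v p :=
  csInf_le ((S_finite n r).image _).bddBelow ⟨p, hp, rfl⟩

lemma lev_mono {n : ℕ} (v : ℕ × ℕ) {r r' : ℕ} (h : r ≤ r') (hne' : (S n r').Nonempty) :
    lev n v r ≤ lev n v r' := by
  obtain ⟨p, hp, hphi⟩ := lev_mem v hne'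
  rw [← hphi]
  exact lev_le v (S_mono n h hp)

/-- The face of minimizers of `phi v` in round `r`. -/
def face (n : ℕ) (v : ℕ × ℕ) (r : ℕ) : Set (ℝ × ℝ) := {p ∈ S n r | phi v p = lev n v r}

lemma face_subset (n : ℕ) (v : ℕ × ℕ) (r : ℕ) : face n v r ⊆ S n r := fun _ h => h.1

lemma face_finite (n : ℕ) (v : ℕ × ℕ) (r : ℕ) : (face n v r).Finite :=
  (S_finite n r).subset (face_subset n v r)

lemma face_nonempty {n r : ℕ} (v : ℕ × ℕ) (hne : (S n r).Nonempty) :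
    (face n v r).Nonempty := by
  obtain ⟨p, hp, hphi⟩ := lev_mem v hne
  exact ⟨p, hp, hphi⟩

/-- The extreme x-coordinates along the face (`true` = max, `false` = min). -/
noncomputable def xex (n : ℕ) (v : ℕ × ℕ) (r : ℕ) (ε : Bool) : ℝ :=
  if ε then sSup (Prod.fst '' face n v r) else sInf (Prod.fst '' face n v r)

/-- The two endpoints of the face. -/
noncomputable def qep (n : ℕ) (v : ℕ × ℕ) (r : ℕ) (ε : Bool) : ℝ × ℝ :=
  (xex n v r ε, (lev n v r - v.1 * xex n v r ε) / v.2)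

lemma qep_spec {n r : ℕ} {v : ℕ × ℕ} (hv2 : 1 ≤ v.2) (hne : (S n r).Nonempty) (ε : Bool) :
    qep n v r ε ∈ face n v r ∧
      ∀ p ∈ face n v r, p ≠ qep n v r ε →
        (if ε then p.1 < xex n v r ε else xex n v r ε < p.1) := by
  have hb : (v.2 : ℝ) ≠ 0 := by positivity
  have hfin : (Prod.fst '' face n v r).Finite := (face_finite n v r).image _
  have hfne : (Prod.fst '' face n v r).Nonempty := (face_nonempty v hne).image _
  have hxmem : xex n v r ε ∈ Prod.fst '' face n v r := by
    unfold xex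
    cases ε
    · simp only [if_neg Bool.false_ne_true]
      exact hfne.csInf_mem hfin
    · simp only [if_pos rfl]
      exact hfne.csSup_mem hfin
  obtain ⟨p, hp, hpx⟩ := hxmem
  have hqp : qep n v r ε = p := by
    have hphi : (v.1 : ℝ) * p.1 + v.2 * p.2 = lev n v r := hp.2
    have hy : (lev n v r - v.1 * xex n v r ε) / v.2 = p.2 := by
      rw [← hpx]; field_simp; linarith
    unfold qep; rw [hy, ← hpx]
  constructor
  · rw [hqp]; exact hp
  · intro p' hp' hne'
    have hble : if ε then p'.1 ≤ xex n v r ε else xex n v r ε ≤ p'.1 := by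
      unfold xex
      cases ε
      · simp only [if_neg Bool.false_ne_true]
        exact csInf_le hfin.bddBelow ⟨p', hp', rfl⟩
      · simp only [if_pos rfl]
        exact le_csSup hfin.bddAbove ⟨p', hp', rfl⟩
    have hnex : p'.1 ≠ xex n v r ε := by
      intro hx
      apply hne'
      rw [hqp]
      apply eq_of_phi_eq_fst_eq hv2 (by rw [hp'.2, hp.2]) (by rw [hx, hpx])
    cases ε
    · simp only [if_neg Bool.false_ne_true] at hble ⊢
      exact lt_of_le_of_ne hble (Ne.symm hnex)
    · simp only [if_pos rfl] at hble ⊢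
      exact lt_of_le_of_ne hble hnex

lemma min_unique_extreme {n r : ℕ} {v : ℕ × ℕ} (hv1 : 1 ≤ v.1) (hv2 : 1 ≤ v.2)
    {q : ℝ × ℝ} (hqf : q ∈ face n v r) (σ : ℝ) (hσ : σ = 1 ∨ σ = -1)
    (huniq : ∀ p ∈ face n v r, p ≠ q → σ * q.1 < σ * p.1) :
    q ∈ (convexHull ℝ (S n r)).extremePoints ℝ := by
  apply extreme_of_unique_min (S_finite n r) (face_subset n v r hqf)
    (α := (n+1) * v.1 + σ) (β := (n+1) * v.2)
  intro p hp hpq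
  have hgrid_p := grid_coord (S_subset_grid n r hp)
  have hgrid_q := grid_coord (S_subset_grid n r (face_subset n v r hqf))
  have hLp : ((n+1) * v.1 + σ) * p.1 + (n+1) * v.2 * p.2
      = (n+1) * phi v p + σ * p.1 := by unfold phi; ring
  have hLq : ((n+1) * v.1 + σ) * q.1 + (n+1) * v.2 * q.2
      = (n+1) * phi v q + σ * q.1 := by unfold phi; ring
  rw [hLp, hLq]
  rcases eq_or_ne (phi v p) (lev n v r) with hface | hnface
  · have hx := huniq p ⟨hp, hface⟩ hpq
    rw [hface, hqf.2]
    linarith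
  · have hlt : lev n v r < phi v p := lt_of_le_of_ne (lev_le v hp) (Ne.symm hnface)
    have hgap : phi v q + 1 ≤ phi v p := by
      exact grid_phi_gap hv1 hv2 (S_subset_grid n r (face_subset n v r hqf))
        (S_subset_grid n r hp) (by rw [hqf.2]; exact hlt)
    have hn1 : (1:ℝ) ≤ (n:ℝ) := by linarith [hgrid_p.1, hgrid_p.2.1]
    have hσ1 : σ * p.1 - σ * q.1 ≥ -((n:ℝ) - 1) := by
      rcases hσ with rfl | rfl
      · simp only [one_mul]; linarith [hgrid_p.1, hgrid_q.2.1]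
      · simp only [neg_one_mul]; linarith [hgrid_p.2.1, hgrid_q.1]
    have hmul : ((n:ℝ)+1) * (phi v q + 1) ≤ ((n:ℝ)+1) * phi v p :=
      mul_le_mul_of_nonneg_left hgap (by linarith)
    nlinarith

lemma qep_extreme {n r : ℕ} {v : ℕ × ℕ} (hv1 : 1 ≤ v.1) (hv2 : 1 ≤ v.2)
    (hne : (S n r).Nonempty) (ε : Bool) :
    qep n v r ε ∈ (convexHull ℝ (S n r)).extremePoints ℝ := by
  obtain ⟨hqf, huniq⟩ := qep_spec hv2 hne ε
  have hq1 : (qep n v r ε).1 = xex n v r ε := rfl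
  cases ε
  · apply min_unique_extreme hv1 hv2 hqf 1 (Or.inl rfl)
    intro p hp hne'
    have := huniq p hp hne'
    simp only [Bool.false_eq_true, if_false] at this
    simp only [one_mul, hq1]
    exact this
  · apply min_unique_extreme hv1 hv2 hqf (-1) (Or.inr rfl)
    intro p hp hne'
    have := huniq p hp hne'
    simp only [if_true] at this
    simp only [neg_one_mul, hq1]
    linarith

lemma qep_dead {n r : ℕ} {v : ℕ × ℕ} (hv1 : 1 ≤ v.1) (hv2 : 1 ≤ v.2)
    (hne : (S n r).Nonempty) (ε : Bool) :
    qep n v r ε ∈ S n r ∧ qep n v r ε ∉ S n (r + 1) := by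
  refine ⟨face_subset n v r (qep_spec hv2 hne ε).1, ?_⟩
  rw [S_succ]
  intro hmem
  exact hmem.2 (qep_extreme hv1 hv2 hne ε)

end TauGridAux
end P3
section P4
namespace TauGridAux

lemma death_unique {n r r' : ℕ} {q : ℝ × ℝ} (h1 : q ∈ S n r) (h2 : q ∉ S n (r + 1))
    (h3 : q ∈ S n r') (h4 : q ∉ S n (r' + 1)) : r = r' := by
  rcases Nat.lt_trichotomy r r' with h | h | h
  · exact absurd (S_mono n (Nat.succ_le_of_lt h) h3) h2
  · exact h
  · exact absurd (S_mono n (Nat.succ_le_of_lt h) h1) h4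

/-- distinct coprime positive integer vectors are not parallel -/
lemma cross_ne {v w : ℕ × ℕ} (hv1 : 1 ≤ v.1) (hv2 : 1 ≤ v.2) (hw1 : 1 ≤ w.1)
    (hw2 : 1 ≤ w.2) (hv : Nat.Coprime v.1 v.2) (hw : Nat.Coprime w.1 w.2)
    (hne : v ≠ w) : ((v.1 : ℝ) * w.2 - v.2 * w.1) ≠ 0 := by
  intro h
  apply hne
  have hnat : v.1 * w.2 = v.2 * w.1 := by exact_mod_cast sub_eq_zero.mp h
  -- v.1 ∣ v.2 * w.1 and coprime v.1 v.2 gives v.1 ∣ w.1 ; symmetric for w.1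
  have d1 : v.1 ∣ w.1 := hv.dvd_of_dvd_mul_left (Dvd.intro w.2 (by linarith [hnat]))
  have d2 : w.1 ∣ v.1 := hw.dvd_of_dvd_mul_left (Dvd.intro v.2 (by linarith [hnat]))
  have e1 : v.1 = w.1 := Nat.dvd_antisymm d1 d2
  have e2 : v.2 = w.2 := by
    have hw1' : 0 < w.1 := hw1
    have : v.2 * w.1 = w.2 * w.1 := by rw [← hnat, e1]; ring
    exact Nat.eq_of_mul_eq_mul_right hw1' this
  exact Prod.ext e1 e2

lemma sign_pair {t u c : ℝ} (ht : t ≠ 0) (hu : u ≠ 0) (hc : c ≠ 0)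
    (h1 : 0 ≤ t * c) (h2 : 0 ≤ u * -c) : t * u < 0 := by
  rcases lt_trichotomy c 0 with h | h | h
  · have htneg : t ≤ 0 := by nlinarith
    have hupos : 0 ≤ u := by nlinarith
    have : t < 0 := lt_of_le_of_ne htneg ht
    have : 0 < u := lt_of_le_of_ne hupos (Ne.symm hu)
    exact mul_neg_of_neg_of_pos (by linarith) this
  · exact absurd h hc
  · have htpos : 0 ≤ t := by nlinarith
    have huneg : u ≤ 0 := by nlinarith
    have h1' : 0 < t := lt_of_le_of_ne htpos (Ne.symm ht)
    have h2' : u < 0 := lt_of_le_of_ne huneg hu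
    exact mul_neg_of_pos_of_neg h1' h2'

lemma three_neg {t₁ t₂ t₃ : ℝ} (h12 : t₁ * t₂ < 0) (h13 : t₁ * t₃ < 0)
    (h23 : t₂ * t₃ < 0) : False := by
  nlinarith [sq_nonneg (t₁ * t₂ * t₃), mul_pos_of_neg_of_neg h12 h13]

/-- The key geometric fact: a grid point `q` cannot simultaneously, for three pairwise
distinct directions, minimize `phi` over a set while a *different* minimizer survives. -/
lemma no_three_directions {v₁ v₂ v₃ : ℕ × ℕ}
    (h₁1 : 1 ≤ v₁.1) (h₁2 : 1 ≤ v₁.2) (hc₁ : Nat.Coprime v₁.1 v₁.2)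
    (h₂1 : 1 ≤ v₂.1) (h₂2 : 1 ≤ v₂.2) (hc₂ : Nat.Coprime v₂.1 v₂.2)
    (h₃1 : 1 ≤ v₃.1) (h₃2 : 1 ≤ v₃.2) (hc₃ : Nat.Coprime v₃.1 v₃.2)
    (hne12 : v₁ ≠ v₂) (hne13 : v₁ ≠ v₃) (hne23 : v₂ ≠ v₃)
    {q p₁ p₂ p₃ : ℝ × ℝ}
    (hp₁ : p₁ ≠ q) (hp₂ : p₂ ≠ q) (hp₃ : p₃ ≠ q)
    (he₁ : phi v₁ p₁ = phi v₁ q) (he₂ : phi v₂ p₂ = phi v₂ q) (he₃ : phi v₃ p₃ = phi v₃ q)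
    (hg : ∀ (w : ℕ × ℕ) (p : ℝ × ℝ), (w = v₁ ∨ w = v₂ ∨ w = v₃) →
      (p = p₁ ∨ p = p₂ ∨ p = p₃) → phi w q ≤ phi w p) : False := by
  -- set up the tangent parameters
  have key : ∀ (v : ℕ × ℕ) (p : ℝ × ℝ), 1 ≤ v.1 → phi v p = phi v q → p ≠ q →
      ∃ t : ℝ, t ≠ 0 ∧ p.1 - q.1 = -(v.2 : ℝ) * t ∧ p.2 - q.2 = (v.1 : ℝ) * t := by
    intro v p hv1 he hpne
    have ha : (v.1 : ℝ) ≠ 0 := by positivity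
    refine ⟨(p.2 - q.2) / v.1, ?_, ?_, by field_simp⟩
    · intro h0
      have h2 : p.2 = q.2 := by
        field_simp at h0; linarith
      have h1 : (v.1 : ℝ) * p.1 = v.1 * q.1 := by unfold phi at he; rw [h2] at he; linarith
      exact hpne (Prod.ext (mul_left_cancel₀ ha h1) h2)
    · unfold phi at he
      field_simp
      nlinarith [he]
  obtain ⟨t₁, ht₁, hx₁, hy₁⟩ := key v₁ p₁ h₁1 he₁ hp₁
  obtain ⟨t₂, ht₂, hx₂, hy₂⟩ := key v₂ p₂ h₂1 he₂ hp₂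
  obtain ⟨t₃, ht₃, hx₃, hy₃⟩ := key v₃ p₃ h₃1 he₃ hp₃
  -- cross products
  set c12 : ℝ := (v₁.1 : ℝ) * v₂.2 - v₁.2 * v₂.1 with hc12
  set c13 : ℝ := (v₁.1 : ℝ) * v₃.2 - v₁.2 * v₃.1 with hc13
  set c23 : ℝ := (v₂.1 : ℝ) * v₃.2 - v₂.2 * v₃.1 with hc23
  have hc12ne := cross_ne h₁1 h₁2 h₂1 h₂2 hc₁ hc₂ hne12
  have hc13ne := cross_ne h₁1 h₁2 h₃1 h₃2 hc₁ hc₃ hne13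
  have hc23ne := cross_ne h₂1 h₂2 h₃1 h₃2 hc₂ hc₃ hne23
  -- inequalities : phi v_j (p_i) ≥ phi v_j q  rewritten via t_i
  have ineq : ∀ (w : ℕ × ℕ) (p : ℝ × ℝ) (t : ℝ) (v : ℕ × ℕ),
      (w = v₁ ∨ w = v₂ ∨ w = v₃) → (p = p₁ ∨ p = p₂ ∨ p = p₃) →
      p.1 - q.1 = -(v.2 : ℝ) * t → p.2 - q.2 = (v.1 : ℝ) * t →
      0 ≤ t * ((v.1 : ℝ) * w.2 - v.2 * w.1) := by
    intro w p t v hw hp hx hy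
    have := hg w p hw hp
    unfold phi at this
    nlinarith [this, hx, hy]
  have i12 : 0 ≤ t₁ * c12 := ineq v₂ p₁ t₁ v₁ (Or.inr (Or.inl rfl)) (Or.inl rfl) hx₁ hy₁
  have i21 : 0 ≤ t₂ * -c12 := by
    have := ineq v₁ p₂ t₂ v₂ (Or.inl rfl) (Or.inr (Or.inl rfl)) hx₂ hy₂
    have hrw : (v₂.1 : ℝ) * v₁.2 - v₂.2 * v₁.1 = -c12 := by rw [hc12]; ring
    rwa [hrw] at this
  have i13 : 0 ≤ t₁ * c13 := ineq v₃ p₁ t₁ v₁ (Or.inr (Or.inr rfl)) (Or.inl rfl) hx₁ hy₁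
  have i31 : 0 ≤ t₃ * -c13 := by
    have := ineq v₁ p₃ t₃ v₃ (Or.inl rfl) (Or.inr (Or.inr rfl)) hx₃ hy₃
    have hrw : (v₃.1 : ℝ) * v₁.2 - v₃.2 * v₁.1 = -c13 := by rw [hc13]; ring
    rwa [hrw] at this
  have i23 : 0 ≤ t₂ * c23 := ineq v₃ p₂ t₂ v₂ (Or.inr (Or.inr rfl)) (Or.inr (Or.inl rfl)) hx₂ hy₂
  have i32 : 0 ≤ t₃ * -c23 := by
    have := ineq v₂ p₃ t₃ v₃ (Or.inr (Or.inl rfl)) (Or.inr (Or.inr rfl)) hx₃ hy₃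
    have hrw : (v₃.1 : ℝ) * v₂.2 - v₃.2 * v₂.1 = -c23 := by rw [hc23]; ring
    rwa [hrw] at this
  exact three_neg (sign_pair ht₁ ht₂ hc12ne i12 i21) (sign_pair ht₁ ht₃ hc13ne i13 i31)
    (sign_pair ht₂ ht₃ hc23ne i23 i32)

end TauGridAux
end P4
section P5
namespace TauGridAux
open Finset

lemma lev_nat {n r : ℕ} {v : ℕ × ℕ} (hv1 : 1 ≤ v.1) (hv2 : 1 ≤ v.2)
    (hne : (S n r).Nonempty) :
    ∃ k : ℕ, lev n v r = k ∧ v.1 + v.2 ≤ k ∧ k ≤ (v.1 + v.2) * n := by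
  obtain ⟨p, hp, hphi⟩ := lev_mem v hne
  obtain ⟨k, hk, h1, h2⟩ := grid_phi_nat hv1 hv2 (S_subset_grid n r hp)
  exact ⟨k, by rw [← hphi, hk], h1, h2⟩

/-- The grid as a Finset. -/
noncomputable def gridF (n : ℕ) : Finset (ℝ × ℝ) := by
  classical
  exact ((Finset.Icc 1 n) ×ˢ (Finset.Icc 1 n)).image
    (fun ab : ℕ × ℕ => ((ab.1 : ℝ), (ab.2 : ℝ)))

lemma mem_gridF {n : ℕ} {p : ℝ × ℝ} (hp : p ∈ grid n) : p ∈ gridF n := by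
  classical
  obtain ⟨a, b, ha1, ha2, hb1, hb2, rfl⟩ := hp
  unfold gridF
  simp only [Finset.mem_image, Finset.mem_product, Finset.mem_Icc]
  exact ⟨(a, b), ⟨⟨ha1, ha2⟩, ⟨hb1, hb2⟩⟩, rfl⟩

lemma gridF_card (n : ℕ) : (gridF n).card ≤ n ^ 2 := by
  classical
  unfold gridF
  calc _ ≤ ((Finset.Icc 1 n) ×ˢ (Finset.Icc 1 n)).card := Finset.card_image_le
  _ = n ^ 2 := by rw [Finset.card_product, Nat.card_Icc]; simp; ring

/-- THE MAIN COUNT: as long as the peeling process is alive at time `K`,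
`K` is bounded by the direction-averaged count. -/
lemma main_count (n M K : ℕ) (hn : 1 ≤ n) (hM : 1 ≤ M)
    (D : Finset (ℕ × ℕ))
    (hD : ∀ v ∈ D, 1 ≤ v.1 ∧ v.1 ≤ M ∧ 1 ≤ v.2 ∧ v.2 ≤ M ∧ Nat.Coprime v.1 v.2)
    (hKne : (S n K).Nonempty) :
    D.card * K ≤ D.card * (2 * M * n) + n ^ 2 := by
  classical
  have hNE : ∀ r, r ≤ K → (S n r).Nonempty := fun r hr => hKne.mono (S_mono n hr)
  set Pr : Finset ((ℕ × ℕ) × ℕ) := D ×ˢ Finset.range K with hPr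
  set Stall : ((ℕ × ℕ) × ℕ) → Prop := fun x => lev n x.1 (x.2 + 1) = lev n x.1 x.2 with hStall
  have hsplit : (Pr.filter Stall).card + (Pr.filter (fun x => ¬ Stall x)).card = Pr.card :=
    Finset.card_filter_add_card_filter_not (fun x => Stall x)
  have hPcard : Pr.card = D.card * K := by rw [hPr, Finset.card_product, Finset.card_range]
  -- ############ FRESH BOUND ############
  have hFR : (Pr.filter (fun x => ¬ Stall x)).card ≤ D.card * (2 * M * n) := by
    rw [Finset.card_eq_sum_card_fiberwise (f := Prod.fst) (t := D)
      (fun x hx => (Finset.mem_product.mp (Finset.mem_filter.mp hx).1).1)]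
    have hbound : ∀ v ∈ D,
        ((Pr.filter (fun x => ¬ Stall x)).filter (fun x => x.1 = v)).card ≤ 2 * M * n := by
      intro v hv
      obtain ⟨hv1, hv1M, hv2, hv2M, hvcop⟩ := hD v hv
      have hIccCard : (Finset.Icc (v.1 + v.2) ((v.1 + v.2) * n)).card ≤ 2 * M * n := by
        rw [Nat.card_Icc]
        have h1 : (v.1 + v.2) * n ≤ 2 * M * n := Nat.mul_le_mul_right n (by omega)
        have h2 : 2 ≤ v.1 + v.2 := by omega
        have h3 : v.1 + v.2 ≤ (v.1 + v.2) * n := Nat.le_mul_of_pos_right _ hn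
        omega
      refine le_trans (Finset.card_le_card_of_injOn
        (fun x => ⌊lev n v (x.2 + 1)⌋₊) ?_ ?_) hIccCard
      · -- maps into Icc
        intro x hx
        simp only [Finset.mem_coe, Finset.mem_filter] at hx
        obtain ⟨⟨hxP, hxF⟩, hxv⟩ := hx
        have hrK : x.2 < K := Finset.mem_range.mp (Finset.mem_product.mp hxP).2
        obtain ⟨k, hk, hk1, hk2⟩ := lev_nat hv1 hv2 (hNE (x.2 + 1) hrK)
        show ⌊lev n v (x.2 + 1)⌋₊ ∈ Finset.Icc (v.1 + v.2) ((v.1 + v.2) * n)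
        rw [hk, Nat.floor_natCast]
        exact Finset.mem_Icc.mpr ⟨hk1, hk2⟩
      · -- injective
        intro x hx y hy hxy
        simp only [Finset.coe_filter, Set.mem_setOf_eq, Finset.mem_filter] at hx hy
        obtain ⟨⟨hxP, hxF⟩, hxv⟩ := hx
        obtain ⟨⟨hyP, hyF⟩, hyv⟩ := hy
        have hxK : x.2 < K := Finset.mem_range.mp (Finset.mem_product.mp hxP).2
        have hyK : y.2 < K := Finset.mem_range.mp (Finset.mem_product.mp hyP).2
        obtain ⟨kx, hkx, -, -⟩ := lev_nat hv1 hv2 (hNE (x.2 + 1) hxK)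
        obtain ⟨ky, hky, -, -⟩ := lev_nat hv1 hv2 (hNE (y.2 + 1) hyK)
        have hxy' : ⌊lev n v (x.2 + 1)⌋₊ = ⌊lev n v (y.2 + 1)⌋₊ := hxy
        have hkeq : kx = ky := by
          rw [hkx, Nat.floor_natCast, hky, Nat.floor_natCast] at hxy'
          exact hxy'
        have hleveq : lev n v (x.2 + 1) = lev n v (y.2 + 1) := by
          rw [hkx, hky, hkeq]
        have hmain : x.2 = y.2 := by
          by_contra hne2
          rcases Nat.lt_or_ge x.2 y.2 with hlt | hge
          · have h1 : lev n v (x.2 + 1) ≤ lev n v y.2 :=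
              lev_mono v hlt (hNE y.2 (le_of_lt hyK))
            have h2 : lev n v y.2 < lev n v (y.2 + 1) := by
              have hle : lev n v y.2 ≤ lev n v (y.2 + 1) :=
                lev_mono v (Nat.le_succ _) (hNE (y.2 + 1) hyK)
              have hne' : lev n v (y.2 + 1) ≠ lev n v y.2 := by
                intro h
                exact hyF (show lev n y.1 (y.2 + 1) = lev n y.1 y.2 by rw [hyv]; exact h)
              exact lt_of_le_of_ne hle (Ne.symm hne')
            rw [hleveq] at h1; linarith
          · have hlt : y.2 < x.2 := lt_of_le_of_ne hge (Ne.symm hne2)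
            have h1 : lev n v (y.2 + 1) ≤ lev n v x.2 :=
              lev_mono v hlt (hNE x.2 (le_of_lt hxK))
            have h2 : lev n v x.2 < lev n v (x.2 + 1) := by
              have hle : lev n v x.2 ≤ lev n v (x.2 + 1) :=
                lev_mono v (Nat.le_succ _) (hNE (x.2 + 1) hxK)
              have hne' : lev n v (x.2 + 1) ≠ lev n v x.2 := by
                intro h
                exact hxF (show lev n x.1 (x.2 + 1) = lev n x.1 x.2 by rw [hxv]; exact h)
              exact lt_of_le_of_ne hle (Ne.symm hne')
            rw [hleveq] at h2; linarith
        exact Prod.ext (hxv.trans hyv.symm) hmain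
    calc ∑ v ∈ D, ((Pr.filter (fun x => ¬ Stall x)).filter (fun x => x.1 = v)).card
        ≤ ∑ _v ∈ D, 2 * M * n := Finset.sum_le_sum hbound
      _ = D.card * (2 * M * n) := by rw [Finset.sum_const, smul_eq_mul]
  -- ############ STALL BOUND ############
  have hST : (Pr.filter Stall).card ≤ n ^ 2 := by
    set ST := Pr.filter Stall with hSTdef
    set Ψ : (((ℕ × ℕ) × ℕ) × Bool) → (ℕ × ℕ) × (ℝ × ℝ) :=
      fun y => (y.1.1, qep n y.1.1 y.1.2 y.2) with hΨ
    have hdata : ∀ x ∈ ST, ∀ ε : Bool,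
        x.1 ∈ D ∧ x.2 < K ∧
        qep n x.1 x.2 ε ∈ S n x.2 ∧ qep n x.1 x.2 ε ∉ S n (x.2 + 1) ∧
        phi x.1 (qep n x.1 x.2 ε) = lev n x.1 x.2 ∧
        lev n x.1 (x.2 + 1) = lev n x.1 x.2 := by
      intro x hx ε
      simp only [hSTdef, Finset.mem_filter] at hx
      obtain ⟨hxP, hxS⟩ := hx
      have hxD := (Finset.mem_product.mp hxP).1
      have hxK : x.2 < K := Finset.mem_range.mp (Finset.mem_product.mp hxP).2
      obtain ⟨hv1, -, hv2, -, -⟩ := hD x.1 hxD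
      have hne := hNE x.2 (le_of_lt hxK)
      obtain ⟨hq1, hq2⟩ := qep_dead hv1 hv2 hne ε
      exact ⟨hxD, hxK, hq1, hq2, (qep_spec hv2 hne ε).1.2, hxS⟩
    have hinj : Set.InjOn Ψ ↑(ST ×ˢ (Finset.univ : Finset Bool)) := by
      intro x hx y hy hxy
      simp only [Finset.coe_product, Set.mem_prod, Finset.mem_coe] at hx hy
      obtain ⟨hx1, -⟩ := hx
      obtain ⟨hy1, -⟩ := hy
      have hxy' : ((x.1.1, qep n x.1.1 x.1.2 x.2) : (ℕ × ℕ) × (ℝ × ℝ))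
          = (y.1.1, qep n y.1.1 y.1.2 y.2) := hxy
      have hveq : x.1.1 = y.1.1 := (Prod.ext_iff.mp hxy').1
      have hqeq : qep n x.1.1 x.1.2 x.2 = qep n y.1.1 y.1.2 y.2 := (Prod.ext_iff.mp hxy').2
      obtain ⟨hxD, hxK, hxq1, hxq2, hxphi, hxstall⟩ := hdata x.1 hx1 x.2
      obtain ⟨-, hyK, hyq1, hyq2, -, -⟩ := hdata y.1 hy1 y.2
      rw [← hqeq] at hyq1 hyq2
      have hreq : x.1.2 = y.1.2 := death_unique hxq1 hxq2 hyq1 hyq2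
      have hq2' : qep n x.1.1 x.1.2 x.2 = qep n x.1.1 x.1.2 y.2 := by
        refine hqeq.trans ?_
        rw [hveq, hreq]
      have hεeq : x.2 = y.2 := by
        by_contra hεne
        obtain ⟨hv1, -, hv2, -, -⟩ := hD x.1.1 hxD
        have hneS := hNE x.1.2 (le_of_lt hxK)
        have hneS' := hNE (x.1.2 + 1) hxK
        obtain ⟨ps, hps, hpsphi⟩ := lev_mem x.1.1 hneS'
        have hpsface : ps ∈ face n x.1.1 x.1.2 :=
          ⟨S_mono n (Nat.le_succ _) hps, by rw [hpsphi, hxstall]⟩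
        have hpsx : ps ≠ qep n x.1.1 x.1.2 x.2 := by
          intro h; rw [h] at hps; exact hxq2 hps
        have hpsy : ps ≠ qep n x.1.1 x.1.2 y.2 := by
          intro h
          have hdead := (qep_dead hv1 hv2 hneS y.2).2
          rw [h] at hps; exact hdead hps
        have hu1 := (qep_spec hv2 hneS x.2).2 ps hpsface hpsx
        have hu2 := (qep_spec hv2 hneS y.2).2 ps hpsface hpsy
        have hxex : xex n x.1.1 x.1.2 x.2 = xex n x.1.1 x.1.2 y.2 :=
          congrArg Prod.fst hq2'
        cases hbx : x.2 <;> cases hby : y.2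
        · exact hεne (hbx.trans hby.symm)
        · rw [hbx] at hu1 hxex; rw [hby] at hu2 hxex
          simp only [Bool.false_eq_true, if_false, if_true] at hu1 hu2
          rw [hxex] at hu1; linarith
        · rw [hbx] at hu1 hxex; rw [hby] at hu2 hxex
          simp only [Bool.false_eq_true, if_false, if_true] at hu1 hu2
          rw [hxex] at hu1; linarith
        · exact hεne (hbx.trans hby.symm)
      exact Prod.ext (Prod.ext hveq hreq) hεeq
    set B := (ST ×ˢ (Finset.univ : Finset Bool)).image Ψ with hB
    have hBcard : B.card = ST.card * 2 := by
      rw [hB, Finset.card_image_of_injOn hinj, Finset.card_product, Finset.card_univ,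
        Fintype.card_bool]
    have hBfib : B.card ≤ 2 * n ^ 2 := by
      have hmapsto : ∀ x ∈ B, x.2 ∈ gridF n := by
        intro x hx
        rw [hB] at hx
        obtain ⟨y, hy, rfl⟩ := Finset.mem_image.mp hx
        have hy1 : y.1 ∈ ST := (Finset.mem_product.mp hy).1
        obtain ⟨-, -, hq1, -, -, -⟩ := hdata y.1 hy1 y.2
        exact mem_gridF (S_subset_grid n y.1.2 hq1)
      rw [Finset.card_eq_sum_card_fiberwise hmapsto]
      have hfib : ∀ q ∈ gridF n, (B.filter (fun x => x.2 = q)).card ≤ 2 := by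
        intro q hq
        by_contra hgt
        push_neg at hgt
        obtain ⟨a, b, c, ha, hb, hc, hab, hac, hbc⟩ :=
          Finset.two_lt_card_iff.mp hgt
        have unpack : ∀ z ∈ B.filter (fun x => x.2 = q),
            ∃ (v : ℕ × ℕ) (r : ℕ), z = (v, q) ∧ v ∈ D ∧ r < K ∧
            q ∈ S n r ∧ q ∉ S n (r + 1) ∧ phi v q = lev n v r ∧
            lev n v (r + 1) = lev n v r := by
          intro z hz
          obtain ⟨hzB, hzq⟩ := Finset.mem_filter.mp hz
          rw [hB] at hzB
          obtain ⟨y, hy, hyz⟩ := Finset.mem_image.mp hzB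
          have hy1 : y.1 ∈ ST := (Finset.mem_product.mp hy).1
          obtain ⟨hD', hK', hq1, hq2, hphi', hstall'⟩ := hdata y.1 hy1 y.2
          have hqq : qep n y.1.1 y.1.2 y.2 = q := by
            have h2 : (Ψ y).2 = q := by rw [hyz]; exact hzq
            simpa [hΨ] using h2
          rw [hqq] at hq1 hq2 hphi'
          refine ⟨y.1.1, y.1.2, ?_, hD', hK', hq1, hq2, hphi', hstall'⟩
          rw [← hyz]; simp [hΨ, hqq]
        obtain ⟨v₁, r₁, hae, hv₁D, hr₁K, hq₁S, hq₁NS, hphi₁, hst₁⟩ := unpack a ha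
        obtain ⟨v₂, r₂, hbe, hv₂D, hr₂K, hq₂S, hq₂NS, hphi₂, hst₂⟩ := unpack b hb
        obtain ⟨v₃, r₃, hce, hv₃D, hr₃K, hq₃S, hq₃NS, hphi₃, hst₃⟩ := unpack c hc
        have hr12 : r₁ = r₂ := death_unique hq₁S hq₁NS hq₂S hq₂NS
        have hr13 : r₁ = r₃ := death_unique hq₁S hq₁NS hq₃S hq₃NS
        subst hr12; subst hr13
        have hv12 : v₁ ≠ v₂ := fun h => hab (by rw [hae, hbe, h])
        have hv13 : v₁ ≠ v₃ := fun h => hac (by rw [hae, hce, h])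
        have hv23 : v₂ ≠ v₃ := fun h => hbc (by rw [hbe, hce, h])
        obtain ⟨h₁1, -, h₁2, -, hc₁⟩ := hD v₁ hv₁D
        obtain ⟨h₂1, -, h₂2, -, hc₂⟩ := hD v₂ hv₂D
        obtain ⟨h₃1, -, h₃2, -, hc₃⟩ := hD v₃ hv₃D
        obtain ⟨p₁, hp₁S, hp₁phi⟩ := lev_mem v₁ (hNE (r₁ + 1) hr₁K)
        obtain ⟨p₂, hp₂S, hp₂phi⟩ := lev_mem v₂ (hNE (r₁ + 1) hr₁K)
        obtain ⟨p₃, hp₃S, hp₃phi⟩ := lev_mem v₃ (hNE (r₁ + 1) hr₁K)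
        have he₁ : phi v₁ p₁ = phi v₁ q := by rw [hp₁phi, hst₁, hphi₁]
        have he₂ : phi v₂ p₂ = phi v₂ q := by rw [hp₂phi, hst₂, hphi₂]
        have he₃ : phi v₃ p₃ = phi v₃ q := by rw [hp₃phi, hst₃, hphi₃]
        have hp₁ne : p₁ ≠ q := fun h => hq₁NS (h ▸ hp₁S)
        have hp₂ne : p₂ ≠ q := fun h => hq₁NS (h ▸ hp₂S)
        have hp₃ne : p₃ ≠ q := fun h => hq₁NS (h ▸ hp₃S)
        have hg : ∀ (w : ℕ × ℕ) (p : ℝ × ℝ), (w = v₁ ∨ w = v₂ ∨ w = v₃) →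
            (p = p₁ ∨ p = p₂ ∨ p = p₃) → phi w q ≤ phi w p := by
          intro w p hw hp
          have hqlev : phi w q = lev n w r₁ := by
            rcases hw with rfl | rfl | rfl
            exacts [hphi₁, hphi₂, hphi₃]
          have hpS : p ∈ S n r₁ := by
            rcases hp with rfl | rfl | rfl
            exacts [S_mono n (Nat.le_succ _) hp₁S, S_mono n (Nat.le_succ _) hp₂S,
              S_mono n (Nat.le_succ _) hp₃S]
          rw [hqlev]
          exact lev_le w hpS
        exact no_three_directions h₁1 h₁2 hc₁ h₂1 h₂2 hc₂ h₃1 h₃2 hc₃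
          hv12 hv13 hv23 hp₁ne hp₂ne hp₃ne he₁ he₂ he₃ hg
      calc ∑ q ∈ gridF n, (B.filter (fun x => x.2 = q)).card
          ≤ ∑ _q ∈ gridF n, 2 := Finset.sum_le_sum hfib
        _ = (gridF n).card * 2 := by rw [Finset.sum_const, smul_eq_mul]
        _ ≤ n ^ 2 * 2 := Nat.mul_le_mul_right 2 (gridF_card n)
        _ = 2 * n ^ 2 := Nat.mul_comm _ _
    -- conclude ST.card ≤ n^2
    have h2 : ST.card * 2 ≤ 2 * n ^ 2 := hBcard ▸ hBfib
    have := Nat.mul_comm ST.card 2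
    omega
  calc D.card * K = (Pr.filter Stall).card + (Pr.filter (fun x => ¬ Stall x)).card :=
        (hsplit.trans hPcard).symm
    _ ≤ n ^ 2 + D.card * (2 * M * n) := Nat.add_le_add hST hFR
    _ = D.card * (2 * M * n) + n ^ 2 := Nat.add_comm _ _

end TauGridAux
end P5
section P6
namespace TauGridAux
open Finset

/-- The set of directions used. -/
noncomputable def DD (M : ℕ) : Finset (ℕ × ℕ) := by
  classical
  exact ((Finset.Icc 1 M) ×ˢ (Finset.Icc 1 M)).filter (fun v => Nat.Coprime v.1 v.2)

lemma DD_cond (M : ℕ) : ∀ v ∈ DD M, 1 ≤ v.1 ∧ v.1 ≤ M ∧ 1 ≤ v.2 ∧ v.2 ≤ M ∧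
    Nat.Coprime v.1 v.2 := by
  classical
  intro v hv
  unfold DD at hv
  simp only [Finset.mem_filter, Finset.mem_product, Finset.mem_Icc] at hv
  exact ⟨hv.1.1.1, hv.1.1.2, hv.1.2.1, hv.1.2.2, hv.2⟩

lemma DD_pos {M : ℕ} (hM : 1 ≤ M) : 0 < (DD M).card := by
  classical
  refine Finset.card_pos.mpr ⟨(1, 1), ?_⟩
  unfold DD
  simp only [Finset.mem_filter, Finset.mem_product, Finset.mem_Icc]
  exact ⟨⟨⟨le_rfl, hM⟩, ⟨le_rfl, hM⟩⟩, Nat.coprime_one_left 1⟩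

lemma sum_inv_sq (M : ℕ) (hM : 2 ≤ M) :
    ∑ d ∈ Finset.Icc 2 M, (1 : ℝ) / (d : ℝ) ^ 2 ≤ 3 / 4 - 1 / (M : ℝ) := by
  induction M with
  | zero => omega
  | succ m ih =>
      rcases Nat.lt_or_ge m 2 with hm | hm
      · -- m + 1 = 2
        have hm2 : m + 1 = 2 := by omega
        rw [hm2]
        norm_num [Finset.Icc_self]
      · rw [Finset.sum_Icc_succ_top (by omega : 2 ≤ m + 1)]
        have hmR : (1 : ℝ) ≤ (m : ℝ) := by exact_mod_cast Nat.one_le_iff_ne_zero.mpr (by omega)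
        have hmpos : (0 : ℝ) < (m : ℝ) := by linarith
        have hm1pos : (0 : ℝ) < (m : ℝ) + 1 := by linarith
        have key : 1 / ((m : ℝ) + 1) ^ 2 + 1 / ((m : ℝ) + 1) ≤ 1 / (m : ℝ) := by
          rw [div_add_div _ _ (by positivity) (by positivity), div_le_div_iff₀ (by positivity) hmpos]
          ring_nf
          nlinarith
        have hcast : ((m + 1 : ℕ) : ℝ) = (m : ℝ) + 1 := by push_cast; ring
        rw [hcast]
        have := ih hm
        linarith

lemma DD_card {M : ℕ} (hM : 1 ≤ M) : (M : ℝ) ^ 2 ≤ 4 * ((DD M).card : ℝ) := by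
  classical
  set Sq := (Finset.Icc 1 M) ×ˢ (Finset.Icc 1 M) with hSq
  have hSqcard : Sq.card = M ^ 2 := by
    rw [hSq, Finset.card_product, Nat.card_Icc]; simp; ring
  have hsplitc : (Sq.filter (fun v => Nat.Coprime v.1 v.2)).card
      + (Sq.filter (fun v => ¬ Nat.Coprime v.1 v.2)).card = M ^ 2 := by
    rw [Finset.card_filter_add_card_filter_not, hSqcard]
  -- bound the non-coprime count
  have hNC : ((Sq.filter (fun v => ¬ Nat.Coprime v.1 v.2)).card : ℝ)
      ≤ 3 / 4 * (M : ℝ) ^ 2 := by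
    have hsub : Sq.filter (fun v => ¬ Nat.Coprime v.1 v.2) ⊆
        (Finset.Icc 2 M).biUnion (fun d =>
          ((Finset.Icc 1 M).filter (fun a => d ∣ a)) ×ˢ
          ((Finset.Icc 1 M).filter (fun b => d ∣ b))) := by
      intro v hv
      simp only [Finset.mem_filter, hSq, Finset.mem_product, Finset.mem_Icc] at hv
      obtain ⟨⟨⟨ha1, haM⟩, ⟨hb1, hbM⟩⟩, hnc⟩ := hv
      have hgpos : 1 ≤ Nat.gcd v.1 v.2 := Nat.one_le_iff_ne_zero.mpr
        (Nat.gcd_ne_zero_left (by omega))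
      have hg2 : 2 ≤ Nat.gcd v.1 v.2 := by
        rcases Nat.lt_or_ge (Nat.gcd v.1 v.2) 2 with h | h
        · exfalso; apply hnc; unfold Nat.Coprime; omega
        · exact h
      have hgM : Nat.gcd v.1 v.2 ≤ M :=
        le_trans (Nat.le_of_dvd (by omega) (Nat.gcd_dvd_left _ _)) haM
      refine Finset.mem_biUnion.mpr ⟨Nat.gcd v.1 v.2, Finset.mem_Icc.mpr ⟨hg2, hgM⟩, ?_⟩
      simp only [Finset.mem_product, Finset.mem_filter, Finset.mem_Icc]
      exact ⟨⟨⟨ha1, haM⟩, Nat.gcd_dvd_left _ _⟩, ⟨⟨hb1, hbM⟩, Nat.gcd_dvd_right _ _⟩⟩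
    have hcount : ∀ d : ℕ, ((Finset.Icc 1 M).filter (fun a => d ∣ a)).card = M / d := by
      intro d
      have : Finset.Icc 1 M = Finset.Ioc 0 M := rfl
      rw [this, Nat.Ioc_filter_dvd_card_eq_div]
    have hnat : (Sq.filter (fun v => ¬ Nat.Coprime v.1 v.2)).card
        ≤ ∑ d ∈ Finset.Icc 2 M, (M / d) ^ 2 := by
      refine le_trans (Finset.card_le_card hsub) (le_trans (Finset.card_biUnion_le) ?_)
      refine Finset.sum_le_sum fun d _ => ?_
      rw [Finset.card_product, hcount d]; exact le_of_eq (sq (M / d)).symm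
    calc ((Sq.filter (fun v => ¬ Nat.Coprime v.1 v.2)).card : ℝ)
        ≤ ((∑ d ∈ Finset.Icc 2 M, (M / d) ^ 2 : ℕ) : ℝ) := by exact_mod_cast hnat
      _ = ∑ d ∈ Finset.Icc 2 M, ((M / d : ℕ) : ℝ) ^ 2 := by push_cast; ring
      _ ≤ ∑ d ∈ Finset.Icc 2 M, (M : ℝ) ^ 2 * (1 / (d : ℝ) ^ 2) := by
          refine Finset.sum_le_sum fun d hd => ?_
          have hd2 : 2 ≤ d := (Finset.mem_Icc.mp hd).1
          have hdpos : (0 : ℝ) < (d : ℝ) := by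
            have : (2 : ℝ) ≤ (d : ℝ) := by exact_mod_cast hd2
            linarith
          have h1 : ((M / d : ℕ) : ℝ) ≤ (M : ℝ) / (d : ℝ) := Nat.cast_div_le
          have h2 : (0 : ℝ) ≤ ((M / d : ℕ) : ℝ) := Nat.cast_nonneg _
          have h3 : (M : ℝ) ^ 2 * (1 / (d : ℝ) ^ 2) = ((M : ℝ) / (d : ℝ)) ^ 2 := by
            field_simp
          rw [h3]
          exact pow_le_pow_left₀ h2 h1 2
      _ = (M : ℝ) ^ 2 * ∑ d ∈ Finset.Icc 2 M, (1 / (d : ℝ) ^ 2) := by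
          rw [Finset.mul_sum]
      _ ≤ 3 / 4 * (M : ℝ) ^ 2 := by
          rcases Nat.lt_or_ge M 2 with hM2 | hM2
          · have : Finset.Icc 2 M = ∅ := by
              apply Finset.Icc_eq_empty; omega
            rw [this]
            simp only [Finset.sum_empty, mul_zero]
            positivity
          · have hs := sum_inv_sq M hM2
            have hMpos : (0 : ℝ) < (M : ℝ) := by
              have : (1 : ℝ) ≤ (M : ℝ) := by exact_mod_cast hM
              linarith
            have hinv : (0 : ℝ) < 1 / (M : ℝ) := by positivity
            nlinarith [sq_nonneg ((M : ℝ))]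
  -- combine
  have hsplitR : ((DD M).card : ℝ) + ((Sq.filter (fun v => ¬ Nat.Coprime v.1 v.2)).card : ℝ)
      = (M : ℝ) ^ 2 := by
    have : (DD M).card + (Sq.filter (fun v => ¬ Nat.Coprime v.1 v.2)).card = M ^ 2 := by
      rw [← hsplitc]; rfl
    exact_mod_cast congrArg (fun k : ℕ => (k : ℝ)) this
  linarith

end TauGridAux
end P6
section P7

open TauGridAux in
/-- The peeling process on the `n × n` grid terminates after `O(n^{4/3})` iterations. -/
theorem tau_grid_upper_bound :
    ∃ C : ℝ, 0 < C ∧ ∀ n : ℕ, 0 < n →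
      (tau (grid n) : ℝ) ≤ C * (n : ℝ) ^ ((4 : ℝ) / 3) := by
  refine ⟨16, by norm_num, ?_⟩
  intro n hn0
  have hn : 1 ≤ n := hn0
  set x : ℝ := (n : ℝ) with hxdef
  have hx : (1 : ℝ) ≤ x := by rw [hxdef]; exact_mod_cast hn
  have hxpos : (0 : ℝ) < x := by linarith
  set t : ℝ := x ^ ((1 : ℝ)/3) with htdef
  have ht1 : (1 : ℝ) ≤ t := Real.one_le_rpow hx (by norm_num)
  have htpos : (0 : ℝ) < t := by linarith
  set M : ℕ := ⌊t⌋₊ + 1 with hMdef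
  have hM1 : 1 ≤ M := Nat.succ_le_succ (Nat.zero_le _)
  have hMcast : (M : ℝ) = (⌊t⌋₊ : ℝ) + 1 := by push_cast [hMdef]; ring
  have hMleR : (M : ℝ) ≤ 2 * t := by
    have h1 : (⌊t⌋₊ : ℝ) ≤ t := Nat.floor_le (by linarith)
    rw [hMcast]; linarith
  have hMgeR : t ≤ (M : ℝ) := by
    have := Nat.lt_floor_add_one t
    rw [hMcast]; linarith
  set d : ℕ := (DD M).card with hddef
  have hd0 : 0 < d := DD_pos hM1
  set K₀ : ℕ := 2 * M * n + n ^ 2 / d + 1 with hK₀def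
  -- the set is empty at time K₀
  have hKempty : peel^[K₀] (grid n) = ∅ := by
    by_contra h
    have hne : (S n K₀).Nonempty := Set.nonempty_iff_ne_empty.mpr h
    have hmc := main_count n M K₀ hn hM1 (DD M) (DD_cond M) hne
    rw [← hddef] at hmc
    have hexp : d * K₀ = d * (2 * M * n) + (d * (n ^ 2 / d) + d) := by
      rw [hK₀def]; ring
    have h1 : d * (2 * M * n) + (d * (n ^ 2 / d) + d) ≤ d * (2 * M * n) + n ^ 2 := by
      rw [← hexp]; exact hmc
    have h2 : d * (n ^ 2 / d) + d ≤ n ^ 2 := Nat.le_of_add_le_add_left h1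
    have h3 : d * (n ^ 2 / d) + n ^ 2 % d = n ^ 2 := Nat.div_add_mod _ _
    have h4 : n ^ 2 % d < d := Nat.mod_lt _ hd0
    have h5 : n ^ 2 % d ≥ d := by omega
    omega
  have htau : tau (grid n) ≤ K₀ := Nat.sInf_le hKempty
  -- now the real-number bound
  have hrpow : x ^ ((4 : ℝ)/3) = t * x := by
    have h := Real.rpow_add hxpos ((1 : ℝ)/3) 1
    rw [Real.rpow_one] at h
    rw [show (4 : ℝ)/3 = (1 : ℝ)/3 + 1 by norm_num, h]
  have ht2 : t ^ 2 = x ^ ((2 : ℝ)/3) := by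
    rw [htdef, ← Real.rpow_natCast (x ^ ((1:ℝ)/3)) 2, ← Real.rpow_mul (le_of_lt hxpos)]
    norm_num
  have hx2 : x ^ 2 = x ^ (2 : ℝ) := by
    rw [← Real.rpow_natCast x 2]; norm_num
  have hdiv : x ^ (2 : ℝ) / x ^ ((2 : ℝ)/3) = x ^ ((4 : ℝ)/3) := by
    rw [← Real.rpow_sub hxpos]; norm_num
  have hb1 : 2 * (M : ℝ) * x ≤ 4 * x ^ ((4 : ℝ)/3) := by
    rw [hrpow]
    nlinarith
  have hb2 : ((n ^ 2 / d : ℕ) : ℝ) ≤ 4 * x ^ ((4 : ℝ)/3) := by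
    have hdM : (M : ℝ) ^ 2 ≤ 4 * (d : ℝ) := DD_card hM1
    have hdposR : (0 : ℝ) < (d : ℝ) := by exact_mod_cast hd0
    have hMposR : (0 : ℝ) < (M : ℝ) := by positivity
    have s1 : ((n ^ 2 / d : ℕ) : ℝ) ≤ (x ^ 2) / (d : ℝ) := by
      have := Nat.cast_div_le (α := ℝ) (m := n ^ 2) (n := d)
      calc ((n ^ 2 / d : ℕ) : ℝ) ≤ ((n ^ 2 : ℕ) : ℝ) / (d : ℝ) := this
        _ = x ^ 2 / (d : ℝ) := by push_cast [hxdef]; ring_nf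
    have s2 : (x ^ 2) / (d : ℝ) ≤ 4 * x ^ 2 / (M : ℝ) ^ 2 := by
      rw [div_le_div_iff₀ hdposR (by positivity)]
      nlinarith [sq_nonneg x]
    have s3 : 4 * x ^ 2 / (M : ℝ) ^ 2 ≤ 4 * x ^ 2 / t ^ 2 := by
      apply div_le_div_of_nonneg_left (by positivity) (by positivity)
      nlinarith
    have s4 : 4 * x ^ 2 / t ^ 2 = 4 * x ^ ((4 : ℝ)/3) := by
      rw [ht2, hx2]
      rw [mul_div_assoc, hdiv]
    linarith
  have hb3 : (1 : ℝ) ≤ x ^ ((4 : ℝ)/3) := Real.one_le_rpow hx (by norm_num)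
  have hKcast : (K₀ : ℝ) = 2 * (M : ℝ) * x + ((n ^ 2 / d : ℕ) : ℝ) + 1 := by
    rw [hK₀def]; push_cast [hxdef]; ring
  calc (tau (grid n) : ℝ) ≤ (K₀ : ℝ) := by exact_mod_cast htau
    _ = 2 * (M : ℝ) * x + ((n ^ 2 / d : ℕ) : ℝ) + 1 := hKcast
    _ ≤ 4 * x ^ ((4 : ℝ)/3) + 4 * x ^ ((4 : ℝ)/3) + x ^ ((4 : ℝ)/3) := by linarith
    _ ≤ 16 * x ^ ((4 : ℝ)/3) := by linarith
end P7
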